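/- Fix μ_max > 0. There is a constant C > 0 such that for every μ ∈ (0, μ_max] and every ξ ∈ ℝ, the symbol F_μ(ξ) = sqrt(tanh(√μ |ξ|)/(√μ |ξ|)) satisfies |F_μ(ξ) − 1| ≤ C μ ξ² and |F_μ'(ξ)| ≤ C μ |ξ|. -/

import Mathlib

open Real

/-- The symbol `F_μ(ξ) = sqrt(tanh(√μ|ξ|)/(√μ|ξ|))`. -/
noncomputable def Fsymb (μ : ℝ) (ξ : ℝ) : ℝ :=
  if μ = 0 ∨ ξ = 0 then 1 else Real.sqrt (Real.tanh (Real.sqrt μ * |ξ|) / (Real.sqrt μ * |ξ|))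


lemma myContinuous_tanh : Continuous Real.tanh := by
  have : Real.tanh = fun y => Real.sinh y / Real.cosh y :=
    funext fun y => Real.tanh_eq_sinh_div_cosh y
  rw [this]
  exact Real.continuous_sinh.div Real.continuous_cosh fun z => (Real.cosh_pos z).ne'

lemma myHasDerivAt_tanh (x : ℝ) : HasDerivAt Real.tanh (1 / Real.cosh x ^ 2) x := by
  have h := (Real.hasDerivAt_sinh x).div (Real.hasDerivAt_cosh x) (Real.cosh_pos x).ne'
  have he : (fun y => Real.sinh y / Real.cosh y) = Real.tanh :=
    funext fun y => (Real.tanh_eq_sinh_div_cosh y).symm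
  rw [show (Real.sinh / Real.cosh) = Real.tanh from he] at h
  refine h.congr_deriv ?_
  have := Real.cosh_sq_sub_sinh_sq x
  field_simp
  nlinarith

lemma my_tanh_nonneg {x : ℝ} (hx : 0 ≤ x) : 0 ≤ Real.tanh x := by
  rw [Real.tanh_eq_sinh_div_cosh]
  exact div_nonneg (by rwa [Real.sinh_nonneg_iff]) (Real.cosh_pos x).le

lemma my_tanh_le_one {x : ℝ} : Real.tanh x ≤ 1 := by
  rw [Real.tanh_eq_sinh_div_cosh, div_le_one (Real.cosh_pos x)]
  rw [Real.sinh_eq, Real.cosh_eq]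
  have := Real.exp_pos (-x)
  linarith

lemma my_tanh_le_self {x : ℝ} (hx : 0 ≤ x) : Real.tanh x ≤ x := by
  have hmono : MonotoneOn (fun y => y - Real.tanh y) (Set.Ici (0:ℝ)) := by
    apply monotoneOn_of_deriv_nonneg (convex_Ici 0)
    · exact (continuous_id.sub myContinuous_tanh).continuousOn
    · intro z _
      exact ((hasDerivAt_id' z).sub (myHasDerivAt_tanh z)).differentiableAt.differentiableWithinAt
    · intro z _
      rw [HasDerivAt.deriv (f := fun y => y - Real.tanh y) ((hasDerivAt_id' z).sub (myHasDerivAt_tanh z))]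
      have h1 := Real.one_le_cosh z
      have h2 : (1:ℝ) ≤ Real.cosh z ^ 2 := by nlinarith
      have : 1 / Real.cosh z ^ 2 ≤ 1 := by
        rw [div_le_one (by nlinarith)]; exact h2
      linarith
  have := hmono (Set.self_mem_Ici) hx hx
  simp [Real.tanh_zero] at this
  linarith

lemma my_tanh_sq (x : ℝ) : Real.tanh x ^ 2 = 1 - 1 / Real.cosh x ^ 2 := by
  rw [Real.tanh_eq_sinh_div_cosh]
  have h := Real.cosh_sq_sub_sinh_sq x
  have hc : Real.cosh x ^ 2 ≠ 0 := by positivity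
  field_simp
  nlinarith

lemma my_tanh_ge {x : ℝ} (hx : 0 ≤ x) : x - x ^ 3 / 3 ≤ Real.tanh x := by
  have hd : ∀ z : ℝ, HasDerivAt (fun y => Real.tanh y - y + y ^ 3 / 3)
      (1 / Real.cosh z ^ 2 - 1 + z ^ 2) z := by
    intro z
    have h3 : HasDerivAt (fun y : ℝ => y ^ 3 / 3) (z ^ 2) z := by
      have := (hasDerivAt_pow 3 z).div_const 3
      exact this.congr_deriv (by norm_num)
    exact ((myHasDerivAt_tanh z).sub (hasDerivAt_id' z)).add h3
  have hmono : MonotoneOn (fun y => Real.tanh y - y + y ^ 3 / 3) (Set.Ici (0:ℝ)) := by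
    apply monotoneOn_of_deriv_nonneg (convex_Ici 0)
    · exact ((myContinuous_tanh.sub continuous_id).add (by continuity)).continuousOn
    · intro z _
      exact (hd z).differentiableAt.differentiableWithinAt
    · intro z hz
      rw [interior_Ici, Set.mem_Ioi] at hz
      rw [(hd z).deriv]
      have h1 := my_tanh_sq z
      have h2 := my_tanh_le_self hz.le
      have h3 := my_tanh_nonneg (x := z) hz.le
      nlinarith
  have := hmono (Set.self_mem_Ici) hx hx
  simp [Real.tanh_zero] at this
  linarith

lemma my_tanh_ge_half {x : ℝ} (hx : 1 ≤ x) : 1 / 2 ≤ Real.tanh x := by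
  rw [Real.tanh_eq_sinh_div_cosh, le_div_iff₀ (Real.cosh_pos x), Real.sinh_eq, Real.cosh_eq]
  have h1 : (2:ℝ) ≤ Real.exp x := by
    have := Real.add_one_le_exp x; linarith
  have h2 : Real.exp x * Real.exp (-x) = 1 := by
    rw [← Real.exp_add]; simp
  have h3 := Real.exp_pos (-x)
  nlinarith

lemma my_self_le_cosh_sq {x : ℝ} (hx : 0 ≤ x) : x ≤ Real.cosh x ^ 2 := by
  rw [Real.cosh_eq]
  have h1 := Real.add_one_le_exp x
  have h2 := Real.exp_pos (-x)
  have h3 := Real.exp_pos x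
  nlinarith [sq_nonneg (1 - x)]



lemma my_tanh_pos {x : ℝ} (hx : 0 < x) : 0 < Real.tanh x := by
  rw [Real.tanh_eq_sinh_div_cosh]
  exact div_pos (Real.sinh_pos_iff.2 hx) (Real.cosh_pos x)

lemma my_g_bounds {x : ℝ} (hx : 0 < x) :
    1 - x ^ 2 / 3 ≤ Real.tanh x / x ∧ Real.tanh x / x ≤ 1 := by
  constructor
  · rw [le_div_iff₀ hx]
    have := my_tanh_ge hx.le
    nlinarith
  · rw [div_le_one hx]
    exact my_tanh_le_self hx.le

lemma my_sqrt_ge {g : ℝ} (h0 : 0 ≤ g) (h1 : g ≤ 1) : g ≤ Real.sqrt g := by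
  calc g = Real.sqrt (g ^ 2) := (Real.sqrt_sq h0).symm
    _ ≤ Real.sqrt g := Real.sqrt_le_sqrt (by nlinarith)

lemma Fsymb_sub_one {μ : ℝ} (hμ : 0 < μ) (ξ : ℝ) :
    |Fsymb μ ξ - 1| ≤ μ / 3 * ξ ^ 2 := by
  rcases eq_or_ne ξ 0 with rfl | hξ
  · simp [Fsymb]
  · have ha : 0 < Real.sqrt μ := Real.sqrt_pos.2 hμ
    set x := Real.sqrt μ * |ξ| with hxdef
    have hx : 0 < x := mul_pos ha (abs_pos.2 hξ)
    have hxsq : x ^ 2 = μ * ξ ^ 2 := by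
      rw [hxdef, mul_pow, Real.sq_sqrt hμ.le, sq_abs]
    have hF : Fsymb μ ξ = Real.sqrt (Real.tanh x / x) := by
      rw [Fsymb, if_neg (by push_neg; exact ⟨hμ.ne', hξ⟩)]
    obtain ⟨hg2, hg1⟩ := my_g_bounds hx
    have hg0 : 0 ≤ Real.tanh x / x := div_nonneg (my_tanh_nonneg hx.le) hx.le
    have hs1 : Real.sqrt (Real.tanh x / x) ≤ 1 := Real.sqrt_le_one.2 hg1
    have hs2 : Real.tanh x / x ≤ Real.sqrt (Real.tanh x / x) := my_sqrt_ge hg0 hg1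
    rw [hF, abs_le]
    constructor <;> nlinarith

set_option maxHeartbeats 1000000 in
lemma Fsymb_deriv_pos {μ ξ : ℝ} (hμ : 0 < μ) (hξ : 0 < ξ) :
    |deriv (Fsymb μ) ξ| ≤ 2 * μ * ξ := by
  set a := Real.sqrt μ with hadef
  have ha : 0 < a := Real.sqrt_pos.2 hμ
  set x := a * ξ with hxdef
  have hx : 0 < x := mul_pos ha hξ
  set g := Real.tanh x / x with hgdef
  have hgpos : 0 < g := div_pos (my_tanh_pos hx) hx
  obtain ⟨hg2, hg1⟩ := my_g_bounds hx
  -- derivative construction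
  have h1 : HasDerivAt (fun y : ℝ => a * y) a ξ := by
    simpa using (hasDerivAt_id' ξ).const_mul a
  have h2 : HasDerivAt (fun y => Real.tanh (a * y)) (1 / Real.cosh x ^ 2 * a) ξ := by
    exact (myHasDerivAt_tanh x).comp ξ h1
  have h3 : HasDerivAt (fun y => Real.tanh (a * y) / (a * y))
      ((1 / Real.cosh x ^ 2 * a * (a * ξ) - Real.tanh (a * ξ) * a) / (a * ξ) ^ 2) ξ :=
    h2.div h1 hx.ne'
  have h4 : HasDerivAt (fun y => Real.sqrt (Real.tanh (a * y) / (a * y)))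
      (1 / (2 * Real.sqrt g) *
        ((1 / Real.cosh x ^ 2 * a * (a * ξ) - Real.tanh (a * ξ) * a) / (a * ξ) ^ 2)) ξ := by
    exact
      (Real.hasDerivAt_sqrt hgpos.ne').comp ξ h3
  have heq : Fsymb μ =ᶠ[nhds ξ] fun y => Real.sqrt (Real.tanh (a * y) / (a * y)) := by
    filter_upwards [Ioi_mem_nhds hξ] with y hy
    rw [Set.mem_Ioi] at hy
    rw [Fsymb, if_neg (by push_neg; exact ⟨hμ.ne', hy.ne'⟩), abs_of_pos hy]
  have hF : HasDerivAt (Fsymb μ) _ ξ := h4.congr_of_eventuallyEq heq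
  rw [hF.deriv]
  have hsq : 0 < Real.sqrt g := Real.sqrt_pos.2 hgpos
  have hμx : μ * ξ = a * x := by rw [hxdef, hadef, ← mul_assoc, Real.mul_self_sqrt hμ.le]
  have hT0 := my_tanh_nonneg hx.le
  have hT1 : Real.tanh x ≤ 1 := my_tanh_le_one
  have hTx := my_tanh_le_self hx.le
  have hcosh : (0:ℝ) < Real.cosh x ^ 2 := by positivity
  have hDeq : 1 / (2 * Real.sqrt g) *
      ((1 / Real.cosh x ^ 2 * a * (a * ξ) - Real.tanh (a * ξ) * a) / (a * ξ) ^ 2)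
      = (x / Real.cosh x ^ 2 - Real.tanh x) * (a / (x ^ 2 * (2 * Real.sqrt g))) := by
    rw [← hxdef]
    field_simp
  have hfacpos : 0 < a / (x ^ 2 * (2 * Real.sqrt g)) :=
    div_pos ha (mul_pos (by positivity) (by linarith))
  rw [hDeq, abs_mul, abs_of_pos hfacpos,
    show 2 * μ * ξ = 2 * (a * x) by rw [← hμx]; ring]
  clear hDeq hF h4 h3 h2 h1 heq hfacpos
  have htsq := my_tanh_sq x
  have hxc : x / Real.cosh x ^ 2 = x * (1 - Real.tanh x ^ 2) := by
    rw [htsq]; ring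
  have htx2 : Real.tanh x ^ 2 ≤ x ^ 2 := by nlinarith
  have hg2' : 1 - x ^ 2 / 3 ≤ g := hg2
  have hg1' : g ≤ 1 := hg1
  have hgx : g * x = Real.tanh x := by rw [hgdef]; exact div_mul_cancel₀ _ hx.ne'
  clear hxdef hgdef hadef hμx hg2 hg1
  clear_value a x g
  rcases le_total x 1 with hx1 | hx1
  · -- small x
    have hN : |x / Real.cosh x ^ 2 - Real.tanh x| ≤ x ^ 3 := by
      rw [hxc, abs_le]
      constructor
      · nlinarith [mul_le_mul_of_nonneg_left htx2 hx.le]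
      · nlinarith [my_tanh_ge hx.le, mul_nonneg hx.le (sq_nonneg (Real.tanh x)),
          pow_nonneg hx.le 3]
    have hgl : 2 / 3 ≤ g := by nlinarith
    have hsgl : 2 / 3 ≤ Real.sqrt g := le_trans hgl (my_sqrt_ge hgpos.le hg1')
    calc |x / Real.cosh x ^ 2 - Real.tanh x| * (a / (x ^ 2 * (2 * Real.sqrt g)))
        ≤ x ^ 3 * (a / (x ^ 2 * 1)) := by
          gcongr
          linarith
      _ = a * x := by field_simp
      _ ≤ 2 * (a * x) := by nlinarith
  · -- large x
    have hN : |x / Real.cosh x ^ 2 - Real.tanh x| ≤ 2 := by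
      rw [abs_le]
      have hc1 : x / Real.cosh x ^ 2 ≤ 1 := by
        rw [div_le_one hcosh]; exact my_self_le_cosh_sq hx.le
      have hc0 : 0 ≤ x / Real.cosh x ^ 2 := div_nonneg hx.le hcosh.le
      constructor <;> nlinarith
    have hsx0 : 0 < Real.sqrt x := Real.sqrt_pos.2 hx
    have hsgx : 1 / 2 ≤ Real.sqrt g * Real.sqrt x := by
      rw [← Real.sqrt_mul hgpos.le, hgx]
      calc (1/2 : ℝ) = Real.sqrt (1/4) := by
            rw [show (1/4:ℝ) = (1/2)^2 by norm_num, Real.sqrt_sq]; norm_num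
        _ ≤ Real.sqrt (1/2) := Real.sqrt_le_sqrt (by norm_num)
        _ ≤ _ := Real.sqrt_le_sqrt (my_tanh_ge_half hx1)
    have hinv : 1 / Real.sqrt x ≤ 2 * Real.sqrt g := by
      rw [div_le_iff₀ hsx0, mul_assoc]
      linarith
    have hsx : Real.sqrt x ≤ x := by
      calc Real.sqrt x ≤ Real.sqrt (x ^ 2) := Real.sqrt_le_sqrt (by nlinarith)
        _ = x := Real.sqrt_sq hx.le
    have hinv' : 1 / x ≤ 2 * Real.sqrt g :=
      le_trans (one_div_le_one_div_of_le hsx0 hsx) hinv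
    have hxx : x ^ 2 * (1 / x) = x := by field_simp
    calc |x / Real.cosh x ^ 2 - Real.tanh x| * (a / (x ^ 2 * (2 * Real.sqrt g)))
        ≤ 2 * (a / (x ^ 2 * (1 / x))) := by gcongr <;> positivity
      _ = 2 * (a / x) := by rw [hxx]
      _ ≤ 2 * (a * x) := by
          have : a / x ≤ a * x := by
            rw [div_le_iff₀ hx]
            have h9 : (1:ℝ) ≤ x * x := by nlinarith
            nlinarith [mul_le_mul_of_nonneg_left h9 ha.le]
          linarith



lemma Fsymb_hasDerivAt_zero {μ : ℝ} (hμ : 0 < μ) : HasDerivAt (Fsymb μ) 0 0 := by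
  rw [hasDerivAt_iff_tendsto]
  have h0 : Fsymb μ 0 = 1 := by simp [Fsymb]
  apply squeeze_zero (g := fun t => μ / 3 * |t|)
  · intro t; positivity
  · intro t
    rcases eq_or_ne t 0 with rfl | ht
    · simp
    · simp only [sub_zero, smul_zero, h0]
      have : |t|⁻¹ * (μ / 3 * t ^ 2) = μ / 3 * |t| := by
        have hta : |t| ≠ 0 := abs_ne_zero.2 ht
        have h2 : t ^ 2 = |t| * |t| := by rw [abs_mul_abs_self]; ring
        rw [h2, show |t|⁻¹ * (μ / 3 * (|t| * |t|)) = |t|⁻¹ * |t| * (μ / 3 * |t|) by ring,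
          inv_mul_cancel₀ hta, one_mul]
      rw [← this]
      exact mul_le_mul_of_nonneg_left (Fsymb_sub_one hμ t) (by positivity)
  · have : Continuous fun t : ℝ => μ / 3 * |t| := continuous_const.mul continuous_abs
    simpa using this.tendsto' 0 _ (by simp)

lemma Fsymb_deriv_bound {μ : ℝ} (hμ : 0 < μ) (ξ : ℝ) :
    |deriv (Fsymb μ) ξ| ≤ 2 * μ * |ξ| := by
  rcases lt_trichotomy ξ 0 with hξ | rfl | hξ
  · have hsymm : Fsymb μ = fun y => Fsymb μ (-y) := by
      funext y
      simp [Fsymb, neg_eq_zero, abs_neg]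
    conv_lhs => rw [hsymm]
    rw [deriv_comp_neg, abs_neg]
    have := Fsymb_deriv_pos hμ (neg_pos.2 hξ)
    rw [abs_of_neg hξ]
    exact this
  · rw [(Fsymb_hasDerivAt_zero hμ).deriv]
    simp
  · rw [abs_of_pos hξ]
    exact Fsymb_deriv_pos hμ hξ

theorem statement16 (μmax : ℝ) (hμmax : 0 < μmax) :
    ∃ C : ℝ, 0 < C ∧
      ∀ μ ∈ Set.Ioc (0:ℝ) μmax, ∀ ξ : ℝ,
        |Fsymb μ ξ - 1| ≤ C * μ * ξ ^ 2 ∧ |deriv (Fsymb μ) ξ| ≤ C * μ * |ξ| := by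
  refine ⟨2, by norm_num, fun μ hμ ξ => ⟨?_, ?_⟩⟩
  · have h := Fsymb_sub_one hμ.1 ξ
    have : μ / 3 * ξ ^ 2 ≤ 2 * μ * ξ ^ 2 := by nlinarith [sq_nonneg ξ, hμ.1]
    linarith
  · exact Fsymb_deriv_bound hμ.1 ξ
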